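/- Suppose η = −1 (put case) and the European values are strictly positive: e_k(x) > 0 for every k < n and x ∈ C. Then the stopping regions are star-shaped toward the origin in (s,z): if x = (s,y,z) ∈ S_k for some k < n and γ ∈ (0,1], then γ∘x = (γs, y, γz) ∈ S_k. -/

import Mathlib

open MeasureTheory ProbabilityTheory

/-- The ambient space `ℝ^{d₁} × ℝ^{d₂} × ℝ^{d₃}` for the state `x = (s, y, z)`. -/
abbrev StateSpace (d₁ d₂ d₃ : ℕ) : Type :=
  (Fin d₁ → ℝ) × (Fin d₂ → ℝ) × (Fin d₃ → ℝ)

/-- Put case (`η = −1`): suppose the European values are strictly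
positive, `e_k(x) > 0` for every `k < n` and `x ∈ C`, where `e_n = φ(n,·)` and
`e_k(x) = ∫ e_{k+1} dκ_k(x)`.  Then the stopping regions
`S_k = {x ∈ C : v_k(x) = φ(k,x)}` are star-shaped toward the origin in `(s,z)`:
if `x = (s,y,z) ∈ S_k` for some `k < n` and `γ ∈ (0,1]`, then
`γ∘x = (γs, y, γz) ∈ S_k`. -/
theorem stmt_6
    {d₁ d₂ d₃ : ℕ}
    (C : Set (StateSpace d₁ d₂ d₃)) (hCmeas : MeasurableSet C)
    (scale : ℝ → StateSpace d₁ d₂ d₃ → StateSpace d₁ d₂ d₃)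
    (hscale : ∀ γ x, scale γ x = (γ • x.1, x.2.1, γ • x.2.2))
    (hC : ∀ γ > (0 : ℝ), ∀ x ∈ C, scale γ x ∈ C)
    (n : ℕ) (hn : 1 ≤ n) (t : ℕ → ℝ) (ht : ∀ i < n, t i < t (i + 1))
    (a : ℝ) (ha : 0 < a)
    (La : Set (StateSpace d₁ d₂ d₃ → ℝ))
    (hLa : La = {ψ | ContinuousOn ψ C ∧
      ∃ c > 0, ∀ x ∈ C, |ψ x| ≤ c * (1 + ‖x‖ ^ a)})
    (α β : StateSpace d₁ d₂ d₃ → ℝ)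
    (hαc : ContinuousOn α C) (hαpos : ∀ x ∈ C, 0 < α x)
    (hαhom : ∀ γ > (0 : ℝ), ∀ x ∈ C, α (scale γ x) = γ * α x)
    (hβc : ContinuousOn β C) (hβnn : ∀ x ∈ C, 0 ≤ β x)
    (hβhom : ∀ γ > (0 : ℝ), ∀ x ∈ C, β (scale γ x) = γ * β x)
    (K r η : ℝ) (hK : 0 < K) (hr : 0 ≤ r) (hη : η = -1)
    (φ : ℕ → StateSpace d₁ d₂ d₃ → ℝ)
    (hφdef : ∀ k ≤ n, ∀ x ∈ C,
      φ k x = Real.exp (-(r * t k)) * max (η * (α x - β x - K)) 0)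
    (hφLa : ∀ k ≤ n, φ k ∈ La)
    (κ : ℕ → Kernel (StateSpace d₁ d₂ d₃) (StateSpace d₁ d₂ d₃))
    (hκ : ∀ k, IsMarkovKernel (κ k))
    (hκC : ∀ k < n, ∀ x ∈ C, (κ k) x Cᶜ = 0)
    (hgc : ∀ k < n, ∀ ψ ∈ La,
      (∀ x ∈ C, Integrable ψ ((κ k) x)) ∧
      (fun x => ∫ y, ψ y ∂((κ k) x)) ∈ La)
    (hκscale : ∀ k < n, ∀ γ > (0 : ℝ), ∀ x ∈ C,
      Measure.map (scale γ) ((κ k) x) = (κ k) (scale γ x))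
    (v : ℕ → StateSpace d₁ d₂ d₃ → ℝ)
    (hvn : ∀ x ∈ C, v n x = φ n x)
    (hv : ∀ k < n, ∀ x ∈ C, v k x = max (φ k x) (∫ y, v (k + 1) y ∂((κ k) x)))
    (e : ℕ → StateSpace d₁ d₂ d₃ → ℝ)
    (hen : ∀ x ∈ C, e n x = φ n x)
    (he : ∀ k < n, ∀ x ∈ C, e k x = ∫ y, e (k + 1) y ∂((κ k) x))
    (hepos : ∀ k < n, ∀ x ∈ C, 0 < e k x)
    (S : ℕ → Set (StateSpace d₁ d₂ d₃))
    (hS : ∀ k, S k = {x | x ∈ C ∧ v k x = φ k x}) :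
    ∀ k < n, ∀ x ∈ S k, ∀ γ : ℝ, 0 < γ → γ ≤ 1 → scale γ x ∈ S k := by
  subst hη
  classical
  -- continuity / measurability of the scaling maps
  have hscont : ∀ γ : ℝ, Continuous (scale γ) := by
    intro γ
    have h : scale γ = fun x : StateSpace d₁ d₂ d₃ => (γ • x.1, x.2.1, γ • x.2.2) :=
      funext (hscale γ)
    rw [h]; fun_prop
  have hsmeas : ∀ γ : ℝ, Measurable (scale γ) := fun γ => (hscont γ).measurable
  -- characterization of membership in La
  have hmem : ∀ ψ : StateSpace d₁ d₂ d₃ → ℝ, ψ ∈ La ↔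
      (ContinuousOn ψ C ∧ ∃ c > 0, ∀ x ∈ C, |ψ x| ≤ c * (1 + ‖x‖ ^ a)) := by
    intro ψ; rw [hLa]; rfl
  -- membership in La only depends on values on C
  have hLa_congr : ∀ ψ ψ' : StateSpace d₁ d₂ d₃ → ℝ, ψ ∈ La →
      (∀ x ∈ C, ψ' x = ψ x) → ψ' ∈ La := by
    intro ψ ψ' hψ hagree
    rw [hmem] at hψ ⊢
    obtain ⟨hc, c, hc0, hb⟩ := hψ
    refine ⟨hc.congr (fun x hx => hagree x hx), c, hc0, fun x hx => ?_⟩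
    rw [hagree x hx]; exact hb x hx
  -- La is stable under max
  have hLa_max : ∀ ψ₁ ψ₂ : StateSpace d₁ d₂ d₃ → ℝ, ψ₁ ∈ La → ψ₂ ∈ La →
      (fun x => max (ψ₁ x) (ψ₂ x)) ∈ La := by
    intro ψ₁ ψ₂ h₁ h₂
    rw [hmem] at h₁ h₂ ⊢
    obtain ⟨hc₁, c₁, hc₁0, hb₁⟩ := h₁
    obtain ⟨hc₂, c₂, hc₂0, hb₂⟩ := h₂
    refine ⟨hc₁.sup hc₂, c₁ + c₂, by linarith, fun x hx => ?_⟩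
    have h1 := hb₁ x hx
    have h2 := hb₂ x hx
    have habs : |max (ψ₁ x) (ψ₂ x)| ≤ max |ψ₁ x| |ψ₂ x| := abs_max_le_max_abs_abs
    have h3 : max |ψ₁ x| |ψ₂ x| ≤ |ψ₁ x| + |ψ₂ x| :=
      max_le (le_add_of_nonneg_right (abs_nonneg _)) (le_add_of_nonneg_left (abs_nonneg _))
    nlinarith
  -- payoff scaling inequality
  have hφs : ∀ k ≤ n, ∀ γ : ℝ, 0 < γ → γ ≤ 1 → ∀ x ∈ C,
      φ k (scale γ x) ≤ γ * φ k x + (1 - γ) * Real.exp (-(r * t k)) * K := by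
    intro k hkn γ h0 h1 x hx
    have hxγ := hC γ h0 x hx
    rw [hφdef k hkn x hx, hφdef k hkn _ hxγ, hαhom γ h0 x hx, hβhom γ h0 x hx]
    have hE : (0:ℝ) < Real.exp (-(r * t k)) := Real.exp_pos _
    have key : max (-1 * (γ * α x - γ * β x - K)) 0 ≤
        γ * max (-1 * (α x - β x - K)) 0 + (1 - γ) * K := by
      apply max_le
      · nlinarith [le_max_left (-1 * (α x - β x - K)) (0:ℝ)]
      · nlinarith [le_max_right (-1 * (α x - β x - K)) (0:ℝ)]
    calc Real.exp (-(r * t k)) * max (-1 * (γ * α x - γ * β x - K)) 0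
        ≤ Real.exp (-(r * t k)) * (γ * max (-1 * (α x - β x - K)) 0 + (1 - γ) * K) := by
          exact mul_le_mul_of_nonneg_left key hE.le
      _ = γ * (Real.exp (-(r * t k)) * max (-1 * (α x - β x - K)) 0)
            + (1 - γ) * Real.exp (-(r * t k)) * K := by ring
  -- a.e. membership in C
  have haeC : ∀ k < n, ∀ x ∈ C, ∀ᵐ y ∂((κ k) x), y ∈ C := by
    intro k hk x hx
    rw [ae_iff]
    exact hκC k hk x hx
  -- main backward induction
  have main : ∀ m : ℕ, m ≤ n →
      (v (n - m) ∈ La ∧ e (n - m) ∈ La ∧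
       (∀ x ∈ C, e (n - m) x ≤ v (n - m) x) ∧
       (∀ γ : ℝ, 0 < γ → γ ≤ 1 → ∀ x ∈ C,
          v (n - m) (scale γ x) ≤ γ * v (n - m) x
            + (1 - γ) * Real.exp (-(r * t (n - m))) * K)) := by
    intro m
    induction m with
    | zero =>
      intro _
      simp only [Nat.sub_zero]
      refine ⟨hLa_congr _ _ (hφLa n le_rfl) hvn, hLa_congr _ _ (hφLa n le_rfl) hen,
        fun x hx => by rw [hen x hx, hvn x hx], ?_⟩
      intro γ h0 h1 x hx
      rw [hvn x hx, hvn _ (hC γ h0 x hx)]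
      exact hφs n le_rfl γ h0 h1 x hx
    | succ m ih =>
      intro hm1
      have hm : m ≤ n := Nat.le_of_succ_le hm1
      obtain ⟨hvLa, heLa, hev, hvscale⟩ := ih hm
      have hk : n - (m + 1) < n := by omega
      have hk1 : n - (m + 1) + 1 = n - m := by omega
      rw [← hk1] at hvLa heLa hev hvscale
      set k := n - (m + 1) with hkdef
      haveI := hκ k
      have heLa' : e k ∈ La :=
        hLa_congr _ _ ((hgc k hk (e (k + 1)) heLa).2) (fun x hx => he k hk x hx)
      have hvLa' : v k ∈ La :=
        hLa_congr _ _ (hLa_max _ _ (hφLa k hk.le) ((hgc k hk (v (k + 1)) hvLa).2))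
          (fun x hx => hv k hk x hx)
      refine ⟨hvLa', heLa', ?_, ?_⟩
      · -- e ≤ v
        intro x hx
        rw [he k hk x hx, hv k hk x hx]
        refine le_trans ?_ (le_max_right _ _)
        refine integral_mono_ae ((hgc k hk _ heLa).1 x hx) ((hgc k hk _ hvLa).1 x hx) ?_
        filter_upwards [haeC k hk x hx] with y hy using hev y hy
      · -- scaling inequality
        intro γ h0 h1 x hx
        have hxγ := hC γ h0 x hx
        rw [hv k hk x hx, hv k hk _ hxγ]
        apply max_le
        · calc φ k (scale γ x) ≤ γ * φ k x + (1 - γ) * Real.exp (-(r * t k)) * K :=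
              hφs k hk.le γ h0 h1 x hx
            _ ≤ γ * max (φ k x) (∫ y, v (k + 1) y ∂((κ k) x))
                  + (1 - γ) * Real.exp (-(r * t k)) * K := by
              have := le_max_left (φ k x) (∫ y, v (k + 1) y ∂((κ k) x))
              nlinarith
        · have hmap := hκscale k hk γ h0 x hx
          have hint1 : Integrable (v (k + 1)) ((κ k) x) := (hgc k hk _ hvLa).1 x hx
          have hint2 : Integrable (v (k + 1)) ((κ k) (scale γ x)) := (hgc k hk _ hvLa).1 _ hxγ
          have hint2' : Integrable (v (k + 1)) (Measure.map (scale γ) ((κ k) x)) := by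
            rw [hmap]; exact hint2
          have hcomp : Integrable (fun y => v (k + 1) (scale γ y)) ((κ k) x) := by
            have := (integrable_map_measure hint2'.aestronglyMeasurable
              (hsmeas γ).aemeasurable).mp hint2'
            exact this
          have heq : ∫ y, v (k + 1) y ∂((κ k) (scale γ x))
              = ∫ y, v (k + 1) (scale γ y) ∂((κ k) x) := by
            rw [← hmap, integral_map (hsmeas γ).aemeasurable hint2'.aestronglyMeasurable]
          rw [heq]
          have hexple : Real.exp (-(r * t (k + 1))) ≤ Real.exp (-(r * t k)) := by
            apply Real.exp_le_exp.mpr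
            nlinarith [ht k hk, mul_le_mul_of_nonneg_left (ht k hk).le hr]
          have hintr : Integrable
              (fun y => γ * v (k + 1) y + (1 - γ) * Real.exp (-(r * t (k + 1))) * K)
              ((κ k) x) := (hint1.const_mul γ).add (integrable_const _)
          have hstep : ∫ y, v (k + 1) (scale γ y) ∂((κ k) x)
              ≤ γ * (∫ y, v (k + 1) y ∂((κ k) x))
                + (1 - γ) * Real.exp (-(r * t (k + 1))) * K := by
            have hmono := integral_mono_ae hcomp hintr
              (by filter_upwards [haeC k hk x hx] with y hy using hvscale γ h0 h1 y hy)
            have hrw : ∫ y, (γ * v (k + 1) y + (1 - γ) * Real.exp (-(r * t (k + 1))) * K)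
                ∂((κ k) x) = γ * (∫ y, v (k + 1) y ∂((κ k) x))
                  + (1 - γ) * Real.exp (-(r * t (k + 1))) * K := by
              rw [integral_add (hint1.const_mul γ) (integrable_const _),
                integral_const_mul, integral_const]
              simp
            rw [hrw] at hmono
            exact hmono
          have hEpos : (0:ℝ) < Real.exp (-(r * t (k + 1))) := Real.exp_pos _
          have hle2 : γ * (∫ y, v (k + 1) y ∂((κ k) x))
              ≤ γ * max (φ k x) (∫ y, v (k + 1) y ∂((κ k) x)) :=
            mul_le_mul_of_nonneg_left (le_max_right _ _) h0.le
          have hle3 : (1 - γ) * Real.exp (-(r * t (k + 1))) * K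
              ≤ (1 - γ) * Real.exp (-(r * t k)) * K :=
            mul_le_mul_of_nonneg_right
              (mul_le_mul_of_nonneg_left hexple (by linarith)) hK.le
          linarith
  have forall_k : ∀ k ≤ n,
      (v k ∈ La ∧ e k ∈ La ∧
       (∀ x ∈ C, e k x ≤ v k x) ∧
       (∀ γ : ℝ, 0 < γ → γ ≤ 1 → ∀ x ∈ C,
          v k (scale γ x) ≤ γ * v k x + (1 - γ) * Real.exp (-(r * t k)) * K)) := by
    intro k hkn
    have := main (n - k) (by omega)
    rwa [Nat.sub_sub_self hkn] at this
  -- conclusion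
  intro k hk x hxS γ hγ0 hγ1
  simp only [hS, Set.mem_setOf_eq] at hxS ⊢
  obtain ⟨hxC, hvφ⟩ := hxS
  have hxγ := hC γ hγ0 x hxC
  obtain ⟨_, _, hev, hvscale⟩ := forall_k k hk.le
  refine ⟨hxγ, ?_⟩
  have hvpos : 0 < v k x := lt_of_lt_of_le (hepos k hk x hxC) (hev x hxC)
  have hφpos : 0 < φ k x := hvφ ▸ hvpos
  have hE : (0:ℝ) < Real.exp (-(r * t k)) := Real.exp_pos _
  have hαβ : α x - β x - K < 0 := by
    by_contra h
    push_neg at h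
    rw [hφdef k hk.le x hxC, max_eq_right (by nlinarith)] at hφpos
    nlinarith
  have hφx : φ k x = Real.exp (-(r * t k)) * (-1 * (α x - β x - K)) := by
    rw [hφdef k hk.le x hxC, max_eq_left (by nlinarith)]
  have hφγ : φ k (scale γ x) = γ * φ k x + (1 - γ) * Real.exp (-(r * t k)) * K := by
    rw [hφdef k hk.le _ hxγ, hαhom γ hγ0 x hxC, hβhom γ hγ0 x hxC,
      max_eq_left (by nlinarith), hφx]
    ring
  have h1 : φ k (scale γ x) ≤ v k (scale γ x) := by
    rw [hv k hk _ hxγ]; exact le_max_left _ _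
  have h2 : v k (scale γ x) ≤ φ k (scale γ x) := by
    rw [hφγ, ← hvφ]
    exact hvscale γ hγ0 hγ1 x hxC
  exact le_antisymm h2 h1
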